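/- Let G be a finite simple graph and e = {u,v} any edge of G. Then D(G,x) = D(G−e,x) + (x/(x−1))·[ D(G−e/u,x) + D(G−e/v,x) − D(G/u,x) − D(G/v,x) − D(G−N[u],x) − D(G−N[v],x) + D(G−e−N[u],x) + D(G−e−N[v],x) ], equivalently (x−1)·(D(G,x) − D(G−e,x)) equals x times the bracketed sum as an identity of polynomials. -/

import Mathlib

open Polynomial

/-- `S` is a dominating set of the graph `G`: every vertex not in `S` has a neighbor in `S`. -/
def SimpleGraph.IsDomSet {V : Type*} (G : SimpleGraph V) (S : Finset V) : Prop :=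
  ∀ v : V, v ∈ S ∨ ∃ u ∈ S, G.Adj u v

open Classical in
/-- The domination polynomial of a finite graph `G`:
`D(G,x) = ∑ d(G,i) xⁱ` where `d(G,i)` is the number of dominating sets of size `i`. -/
noncomputable def domPoly {V : Type*} [Fintype V] (G : SimpleGraph V) : Polynomial ℂ :=
  ∑ S ∈ Finset.univ.filter (fun S : Finset V => G.IsDomSet S), X ^ S.card

/-- The vertex contraction `G/u`: join all pairs of vertices in `N(u)` by edges and
then delete `u`. -/
def SimpleGraph.contractVert {V : Type*} (G : SimpleGraph V) (u : V) :
    SimpleGraph {v : V // v ≠ u} :=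
  SimpleGraph.fromRel (fun a b => G.Adj a b ∨ (G.Adj u a ∧ G.Adj u b))

/-- The graph `G − N[u]`, obtained by deleting the closed neighborhood of `u`. -/
def SimpleGraph.deleteClosedNbhd {V : Type*} (G : SimpleGraph V) (u : V) :
    SimpleGraph {v : V // v ≠ u ∧ ¬ G.Adj u v} :=
  SimpleGraph.comap Subtype.val G

set_option linter.unusedSectionVars false


namespace EdgeRed

open Finset

variable {V : Type*} [Fintype V]

open Classical in
noncomputable def fp (q : Finset V → Prop) : Polynomial ℂ :=
  ∑ S ∈ Finset.univ.filter q, X ^ S.card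

lemma fp_congr {q q' : Finset V → Prop} (h : ∀ S, q S ↔ q' S) : fp q = fp q' :=
  congrArg fp (funext fun S => propext (h S))

lemma fp_split (q r : Finset V → Prop) :
    fp q = fp (fun S => q S ∧ r S) + fp (fun S => q S ∧ ¬ r S) := by
  classical
  simp only [fp, Finset.sum_filter, ← Finset.sum_add_distrib]
  refine Finset.sum_congr rfl fun S _ => ?_
  by_cases hq : q S <;> by_cases hr : r S <;> simp [hq, hr]

open Classical in
lemma fp_insert (a : V) (q q' : Finset V → Prop)
    (h : ∀ S, q S ↔ a ∈ S ∧ q' (S.erase a)) (h' : ∀ S, q' S → a ∉ S) :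
    fp q = X * fp q' := by
  classical
  rw [fp, fp, Finset.mul_sum]
  refine Finset.sum_nbij' (fun S => S.erase a) (fun S => insert a S) ?_ ?_ ?_ ?_ ?_
  · intro S hS
    simp only [Finset.mem_filter, Finset.mem_univ, true_and] at hS ⊢
    exact ((h S).1 hS).2
  · intro S hS
    simp only [Finset.mem_filter, Finset.mem_univ, true_and] at hS ⊢
    rw [h]
    refine ⟨Finset.mem_insert_self _ _, ?_⟩
    rw [Finset.erase_insert (h' S hS)]
    exact hS
  · intro S hS
    simp only [Finset.mem_filter, Finset.mem_univ, true_and] at hS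
    exact Finset.insert_erase ((h S).1 hS).1
  · intro S hS
    simp only [Finset.mem_filter, Finset.mem_univ, true_and] at hS
    exact Finset.erase_insert (h' S hS)
  · intro S hS
    simp only [Finset.mem_filter, Finset.mem_univ, true_and] at hS
    have ha : a ∈ S := ((h S).1 hS).1
    have h1 : S.card = (S.erase a).card + 1 := by
      rw [Finset.card_erase_of_mem ha]
      have h2 : 0 < S.card := Finset.card_pos.2 ⟨a, ha⟩
      omega
    rw [h1, pow_succ, mul_comm]

def domP (H : SimpleGraph V) (S : Finset V) : Prop := ∀ w, w ∈ S ∨ ∃ t ∈ S, H.Adj t w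

lemma domPoly_eq_fp (H : SimpleGraph V) : domPoly H = fp (domP H) := rfl

open Classical in
lemma domPoly_subtype (p : V → Prop) (H : SimpleGraph {x // p x})
    (r : V → V → Prop) (hr : ∀ a b : {x // p x}, H.Adj a b ↔ r a.1 b.1) :
    domPoly H =
      fp (fun S : Finset V => (∀ x ∈ S, p x) ∧ ∀ w, p w → w ∉ S → ∃ t ∈ S, r t w) := by
  classical
  unfold domPoly fp
  refine Finset.sum_nbij' (fun S => S.map (Function.Embedding.subtype p))
    (fun S => S.subtype p) ?_ ?_ ?_ ?_ ?_
  · intro S hS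
    simp only [Finset.mem_filter, Finset.mem_univ, true_and] at hS ⊢
    constructor
    · intro x hx
      rcases Finset.mem_map.1 hx with ⟨a, _, rfl⟩
      exact a.2
    · intro w hw hwS
      rcases hS ⟨w, hw⟩ with h | ⟨t, ht, hadj⟩
      · exact (hwS (Finset.mem_map.2 ⟨⟨w, hw⟩, h, rfl⟩)).elim
      · exact ⟨t.1, Finset.mem_map.2 ⟨t, ht, rfl⟩, (hr t ⟨w, hw⟩).1 hadj⟩
  · intro S hS
    simp only [Finset.mem_filter, Finset.mem_univ, true_and] at hS ⊢
    intro b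
    by_cases hb : b ∈ S.subtype p
    · exact Or.inl hb
    · refine Or.inr ?_
      have hbS : b.1 ∉ S := fun hbS => hb (Finset.mem_subtype.2 hbS)
      rcases hS.2 b.1 b.2 hbS with ⟨t, htS, hrt⟩
      have hpt : p t := hS.1 t htS
      exact ⟨⟨t, hpt⟩, Finset.mem_subtype.2 htS, (hr ⟨t, hpt⟩ b).2 hrt⟩
  · intro S _
    ext a
    simp only [Finset.mem_subtype, Finset.mem_map, Function.Embedding.subtype,
      Function.Embedding.coeFn_mk]
    exact ⟨fun ⟨b, hb, he⟩ => by rwa [← Subtype.ext he], fun ha => ⟨a, ha, rfl⟩⟩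
  · intro S hS
    simp only [Finset.mem_filter, Finset.mem_univ, true_and] at hS
    show (S.subtype p).map (Function.Embedding.subtype p) = S
    rw [Finset.subtype_map, Finset.filter_eq_self]
    exact hS.1
  · intro S _
    rw [Finset.card_map]

end EdgeRed


section Steps

variable {V : Type*} [Fintype V]

namespace EdgeRed
open Finset

def adjS (G : SimpleGraph V) (S : Finset V) (w : V) : Prop := ∃ t ∈ S, G.Adj t w

def Bp (G : SimpleGraph V) (a b : V) (S : Finset V) : Prop :=
  (∀ x ∈ S, x ≠ b ∧ ¬ G.Adj b x) ∧
    ∀ w, w ∉ S → w ≠ a → ¬ G.Adj a w → adjS G S w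

def Dp (G : SimpleGraph V) (a b : V) (S : Finset V) : Prop :=
  (∀ x ∈ S, x ≠ b ∧ ¬ G.Adj b x) ∧
    ∀ w, w ∉ S → (w ≠ b ∧ ¬ G.Adj b w) → ¬ G.Adj a w → adjS G S w

def Cp (G : SimpleGraph V) (a b : V) (S : Finset V) : Prop :=
  (∀ x ∈ S, x ≠ b ∧ ¬ G.Adj b x) ∧ (∀ x ∈ S, ¬ G.Adj a x) ∧
    ∀ w, (w ≠ b ∧ ¬ G.Adj b w) → w ∉ S → adjS G S w

def Ep (G : SimpleGraph V) (a b : V) (S : Finset V) : Prop :=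
  Dp G a b S ∧ ∃ w, G.Adj b w ∧ ¬ G.Adj a w ∧ w ≠ a ∧ ¬ adjS G S w

def A1p (G : SimpleGraph V) (a b : V) (S : Finset V) : Prop :=
  Bp G a b S ∧ ∃ x ∈ S, G.Adj a x

def qCon (H : SimpleGraph V) (u : V) (S : Finset V) : Prop :=
  (∀ x ∈ S, x ≠ u) ∧
    ∀ w, w ≠ u → w ∉ S → ∃ t ∈ S, t ≠ w ∧ (H.Adj t w ∨ (H.Adj u t ∧ H.Adj u w))

def qN (H : SimpleGraph V) (v : V) (S : Finset V) : Prop :=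
  (∀ x ∈ S, x ≠ v ∧ ¬ H.Adj v x) ∧
    ∀ w, (w ≠ v ∧ ¬ H.Adj v w) → w ∉ S → ∃ t ∈ S, H.Adj t w

variable (G : SimpleGraph V) (u v : V)

lemma ge_adj (a b : V) :
    (G.deleteEdges {s(u, v)}).Adj a b ↔
      G.Adj a b ∧ ¬(a = u ∧ b = v) ∧ ¬(a = v ∧ b = u) := by
  rw [SimpleGraph.deleteEdges_adj, Set.mem_singleton_iff, Sym2.eq_iff]
  tauto

lemma ge_adj_of (a b : V) (h : (G.deleteEdges {s(u, v)}).Adj a b) : G.Adj a b :=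
  ((ge_adj G u v a b).1 h).1

variable {G u v}

lemma ge_adj_of' {a b : V} (hau : a ≠ u) (hav : a ≠ v) (h : G.Adj a b) :
    (G.deleteEdges {s(u, v)}).Adj a b := by
  rw [ge_adj]
  exact ⟨h, fun hc => hau hc.1, fun hc => hav hc.1⟩

lemma bp_not_mem (huv : G.Adj u v) {S : Finset V} (h : Bp G u v S) : u ∉ S :=
  fun hu => (h.1 u hu).2 huv.symm

lemma dp_not_mem (huv : G.Adj u v) {S : Finset V} (h : Dp G u v S) : u ∉ S :=
  fun hu => (h.1 u hu).2 huv.symm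

lemma ep_not_mem (huv : G.Adj u v) {S : Finset V} (h : Ep G v u S) : v ∉ S :=
  fun hv => (h.1.1 v hv).2 huv

lemma a1p_not_mem {S : Finset V} (h : A1p G u v S) : v ∉ S :=
  fun hv => (h.1.1 v hv).1 rfl

open Classical in
/-- Step A, main case: dominating `G` but not `G-e`, with `u ∈ S`. -/
lemma stepA_iff (huv : G.Adj u v) (S : Finset V) :
    ((domP G S ∧ ¬ domP (G.deleteEdges {s(u, v)}) S) ∧ u ∈ S) ↔
      (u ∈ S ∧ Bp G u v (S.erase u)) := by
  classical
  constructor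
  · rintro ⟨⟨hdom, hnot⟩, huS⟩
    unfold domP at hnot
    push_neg at hnot
    obtain ⟨w₀, hw₀S, hw₀⟩ := hnot
    -- show w₀ = v
    have hGw₀ := hdom w₀
    rcases hGw₀ with h | ⟨t, htS, hadj⟩
    · exact absurd h hw₀S
    have hG2 := hw₀ t htS
    rw [ge_adj] at hG2
    have hcase : (t = u ∧ w₀ = v) ∨ (t = v ∧ w₀ = u) := by tauto
    have hw₀v : w₀ = v := by
      rcases hcase with ⟨_, h⟩ | ⟨_, h⟩
      · exact h
      · exact absurd (h ▸ huS) hw₀S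
    rw [hw₀v] at hw₀S hw₀
    refine ⟨huS, ⟨?_, ?_⟩⟩
    · intro x hx
      have hxS := Finset.mem_of_mem_erase hx
      have hxu := Finset.ne_of_mem_erase hx
      refine ⟨fun he => hw₀S (he ▸ hxS), fun hvx => ?_⟩
      have hx2 := hw₀ x hxS
      rw [ge_adj] at hx2
      have hxv : x ≠ v := fun he => hw₀S (he ▸ hxS)
      exact hx2 ⟨hvx.symm, fun hc => hxu hc.1, fun hc => hxv hc.1⟩
    · intro w hwE hwu hadjuw
      have hwS : w ∉ S := fun hw => hwE (Finset.mem_erase.2 ⟨hwu, hw⟩)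
      rcases hdom w with h | ⟨t, htS, hadj⟩
      · exact absurd h hwS
      have htu : t ≠ u := fun h => hadjuw (h ▸ hadj)
      exact ⟨t, Finset.mem_erase.2 ⟨htu, htS⟩, hadj⟩
  · rintro ⟨huS, hgnd, hBdom⟩
    have hvu : v ≠ u := (G.ne_of_adj huv).symm
    have hvS : v ∉ S := fun hvS => (hgnd v (Finset.mem_erase.2 ⟨hvu, hvS⟩)).1 rfl
    refine ⟨⟨?_, ?_⟩, huS⟩
    · intro w
      by_cases hwS : w ∈ S
      · exact Or.inl hwS
      right
      by_cases hadjuw : G.Adj u w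
      · exact ⟨u, huS, hadjuw⟩
      · have hwu : w ≠ u := fun h => hwS (h ▸ huS)
        obtain ⟨t, htE, ht⟩ :=
          hBdom w (fun hw => hwS (Finset.mem_of_mem_erase hw)) hwu hadjuw
        exact ⟨t, Finset.mem_of_mem_erase htE, ht⟩
    · intro hdomGe
      rcases hdomGe v with h | ⟨t, htS, hadj⟩
      · exact hvS h
      rw [ge_adj] at hadj
      obtain ⟨hGtv, hn1, hn2⟩ := hadj
      by_cases htu : t = u
      · exact hn1 ⟨htu, rfl⟩
      · exact (hgnd t (Finset.mem_erase.2 ⟨htu, htS⟩)).2 hGtv.symm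

lemma domGe_of_iff (huv : G.Adj u v) {S : Finset V} (hiff : (u ∈ S ↔ v ∈ S))
    (hd : domP G S) : domP (G.deleteEdges {s(u, v)}) S := by
  intro w
  by_cases hw : w ∈ S
  · exact Or.inl hw
  rcases hd w with h | ⟨t, ht, hadj⟩
  · exact Or.inl h
  refine Or.inr ⟨t, ht, ?_⟩
  rw [ge_adj]
  refine ⟨hadj, ?_, ?_⟩
  · rintro ⟨rfl, rfl⟩
    exact hw (hiff.1 ht)
  · rintro ⟨rfl, rfl⟩
    exact hw (hiff.2 ht)

lemma stepA_other (huv : G.Adj u v) (S : Finset V) :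
    ((domP G S ∧ ¬ domP (G.deleteEdges {s(u, v)}) S) ∧ u ∉ S) ↔
      ((domP G S ∧ ¬ domP (G.deleteEdges {s(u, v)}) S) ∧ v ∈ S) := by
  constructor
  · rintro ⟨⟨hd, hn⟩, huS⟩
    refine ⟨⟨hd, hn⟩, ?_⟩
    by_contra hvS
    exact hn (domGe_of_iff huv (iff_of_false huS hvS) hd)
  · rintro ⟨⟨hd, hn⟩, hvS⟩
    refine ⟨⟨hd, hn⟩, ?_⟩
    intro huS
    exact hn (domGe_of_iff huv (iff_of_true huS hvS) hd)

end EdgeRed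
end Steps

section Steps2
variable {V : Type*} [Fintype V]
namespace EdgeRed
open Finset

variable {G : SimpleGraph V} {u v : V}

lemma ge_mk {a b : V} (h : G.Adj a b) (h1 : ¬(a = u ∧ b = v)) (h2 : ¬(a = v ∧ b = u)) :
    (G.deleteEdges {s(u, v)}).Adj a b := by
  rw [ge_adj]
  exact ⟨h, h1, h2⟩

open Classical in
/-- Step C, case `u ∈ S`: dominating sets of `G-e-N[v]` containing `u`. -/
lemma stepC_mem_iff (huv : G.Adj u v) (S : Finset V) :
    (qN (G.deleteEdges {s(u, v)}) v S ∧ u ∈ S) ↔ (u ∈ S ∧ Dp G u v (S.erase u)) := by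
  classical
  have hne : u ≠ v := G.ne_of_adj huv
  constructor
  · rintro ⟨⟨hgnd, hdom⟩, huS⟩
    refine ⟨huS, ⟨?_, ?_⟩⟩
    · intro x hx
      have hxS := Finset.mem_of_mem_erase hx
      have hxu := Finset.ne_of_mem_erase hx
      obtain ⟨hxv, hnadj⟩ := hgnd x hxS
      exact ⟨hxv, fun hadj =>
        hnadj (ge_mk hadj (fun hc => hne hc.1.symm) (fun hc => hxu hc.2))⟩
    · rintro w hwE ⟨hwv, hnvw⟩ hnuw
      have hwu : w ≠ u := fun h => hnvw (h ▸ huv.symm)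
      have hwS : w ∉ S := fun hw => hwE (Finset.mem_erase.2 ⟨hwu, hw⟩)
      have hp : w ≠ v ∧ ¬ (G.deleteEdges {s(u, v)}).Adj v w :=
        ⟨hwv, fun h => hnvw (ge_adj_of G u v _ _ h)⟩
      obtain ⟨t, htS, hadj⟩ := hdom w hp hwS
      have htu : t ≠ u := fun h => hnuw (h ▸ ge_adj_of G u v _ _ hadj)
      exact ⟨t, Finset.mem_erase.2 ⟨htu, htS⟩, ge_adj_of G u v _ _ hadj⟩
  · rintro ⟨huS, hgnd, hdom⟩
    refine ⟨⟨?_, ?_⟩, huS⟩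
    · intro x hx
      by_cases hxu : x = u
      · refine ⟨by rw [hxu]; exact hne, fun h => ?_⟩
        rw [hxu, ge_adj] at h
        exact h.2.2 ⟨rfl, rfl⟩
      · obtain ⟨hxv, hnadj⟩ := hgnd x (Finset.mem_erase.2 ⟨hxu, hx⟩)
        exact ⟨hxv, fun h => hnadj (ge_adj_of G u v _ _ h)⟩
    · rintro w ⟨hwv, hnvw⟩ hwS
      have hwu : w ≠ u := fun h => hwS (h ▸ huS)
      by_cases hadjuw : G.Adj u w
      · exact ⟨u, huS, ge_mk hadjuw (fun hc => hwv hc.2) (fun hc => hne hc.1)⟩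
      · have hnvw' : ¬ G.Adj v w := fun h =>
          hnvw (ge_mk h (fun hc => hne hc.1.symm) (fun hc => hwu hc.2))
        obtain ⟨t, htE, hadj⟩ := hdom w (fun hw => hwS (Finset.mem_of_mem_erase hw))
          ⟨hwv, hnvw'⟩ hadjuw
        have htu : t ≠ u := Finset.ne_of_mem_erase htE
        have htv : t ≠ v := (hgnd t htE).1
        exact ⟨t, Finset.mem_of_mem_erase htE,
          ge_mk hadj (fun hc => htu hc.1) (fun hc => htv hc.1)⟩

open Classical in
/-- Step C, case `u ∉ S`. -/
lemma stepC_notmem_iff (huv : G.Adj u v) (S : Finset V) :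
    (qN (G.deleteEdges {s(u, v)}) v S ∧ u ∉ S) ↔
      (qN G v S ∧ ∃ x ∈ S, G.Adj u x) := by
  classical
  have hne : u ≠ v := G.ne_of_adj huv
  constructor
  · rintro ⟨⟨hgnd, hdom⟩, huS⟩
    have hgnd' : ∀ x ∈ S, x ≠ v ∧ ¬ G.Adj v x := by
      intro x hx
      obtain ⟨hxv, hnadj⟩ := hgnd x hx
      have hxu : x ≠ u := fun h => huS (h ▸ hx)
      exact ⟨hxv, fun h =>
        hnadj (ge_mk h (fun hc => hne hc.1.symm) (fun hc => hxu hc.2))⟩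
    refine ⟨⟨hgnd', ?_⟩, ?_⟩
    · rintro w ⟨hwv, hnvw⟩ hwS
      obtain ⟨t, htS, hadj⟩ := hdom w ⟨hwv, fun h => hnvw (ge_adj_of G u v _ _ h)⟩ hwS
      exact ⟨t, htS, ge_adj_of G u v _ _ hadj⟩
    · have hpu : u ≠ v ∧ ¬ (G.deleteEdges {s(u, v)}).Adj v u := by
        refine ⟨hne, fun h => ?_⟩
        rw [ge_adj] at h
        exact h.2.2 ⟨rfl, rfl⟩
      obtain ⟨t, htS, hadj⟩ := hdom u hpu huS
      exact ⟨t, htS, (ge_adj_of G u v _ _ hadj).symm⟩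
  · rintro ⟨⟨hgnd, hdom⟩, x₀, hx₀S, hx₀⟩
    have huS : u ∉ S := fun h => (hgnd u h).2 huv.symm
    refine ⟨⟨?_, ?_⟩, huS⟩
    · intro x hx
      obtain ⟨hxv, hnadj⟩ := hgnd x hx
      exact ⟨hxv, fun h => hnadj (ge_adj_of G u v _ _ h)⟩
    · rintro w ⟨hwv, hnvw⟩ hwS
      by_cases hwu : w = u
      · refine ⟨x₀, hx₀S, ?_⟩
        rw [hwu]
        exact ge_mk hx₀.symm (fun hc => huS (hc.1 ▸ hx₀S))
          (fun hc => (hgnd x₀ hx₀S).1 hc.1)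
      · have hnvw' : ¬ G.Adj v w := fun h =>
          hnvw (ge_mk h (fun hc => hne hc.1.symm) (fun hc => hwu hc.2))
        obtain ⟨t, htS, hadj⟩ := hdom w ⟨hwv, hnvw'⟩ hwS
        exact ⟨t, htS, ge_mk hadj (fun hc => huS (hc.1 ▸ htS))
          (fun hc => (hgnd t htS).1 hc.1)⟩

open Classical in
/-- qN G v with no neighbor of u is Cp G u v. -/
lemma stepC_cp_iff (S : Finset V) :
    (qN G v S ∧ ¬ ∃ x ∈ S, G.Adj u x) ↔ Cp G u v S := by
  constructor
  · rintro ⟨⟨hgnd, hdom⟩, hno⟩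
    push_neg at hno
    exact ⟨hgnd, hno, fun w hp hwS => hdom w hp hwS⟩
  · rintro ⟨hgnd, hno, hdom⟩
    refine ⟨⟨hgnd, fun w hp hwS => hdom w hp hwS⟩, ?_⟩
    push_neg
    exact hno

/-- Step D: splitting Dp into Bp and Ep. -/
lemma stepD_b_iff (huv : G.Adj u v) (S : Finset V) :
    (Dp G u v S ∧ ∀ w, G.Adj v w → ¬ G.Adj u w → w ≠ u → adjS G S w) ↔ Bp G u v S := by
  constructor
  · rintro ⟨⟨hgnd, hdom⟩, hr⟩
    refine ⟨hgnd, ?_⟩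
    intro w hwS hwu hnuw
    by_cases hvw : G.Adj v w
    · exact hr w hvw hnuw hwu
    · have hwv : w ≠ v := fun h => hnuw (h ▸ huv)
      exact hdom w hwS ⟨hwv, hvw⟩ hnuw
  · rintro ⟨hgnd, hdom⟩
    refine ⟨⟨hgnd, ?_⟩, ?_⟩
    · rintro w hwS ⟨hwv, hnvw⟩ hnuw
      have hwu : w ≠ u := fun h => hnvw (h ▸ huv.symm)
      exact hdom w hwS hwu hnuw
    · intro w hvw hnuw hwu
      have hwS : w ∉ S := fun hw => (hgnd w hw).2 hvw
      exact hdom w hwS hwu hnuw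

open Classical in
lemma stepD_e_iff (S : Finset V) :
    (Dp G u v S ∧ ¬ ∀ w, G.Adj v w → ¬ G.Adj u w → w ≠ u → adjS G S w) ↔ Ep G u v S := by
  classical
  constructor
  · rintro ⟨hD, hr⟩
    push_neg at hr
    obtain ⟨w, hvw, hnuw, hwu, hnadj⟩ := hr
    exact ⟨hD, w, hvw, hnuw, hwu, hnadj⟩
  · rintro ⟨hD, w, hvw, hnuw, hwu, hnadj⟩
    refine ⟨hD, ?_⟩
    push_neg
    exact ⟨w, hvw, hnuw, hwu, hnadj⟩

open Classical in
/-- Step E: Bp with no neighbor of u is Cp with roles swapped. -/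
lemma stepE_iff (huv : G.Adj u v) (S : Finset V) :
    (Bp G u v S ∧ ¬ ∃ x ∈ S, G.Adj u x) ↔ Cp G v u S := by
  classical
  constructor
  · rintro ⟨⟨hgnd, hdom⟩, hno⟩
    push_neg at hno
    refine ⟨?_, ?_, ?_⟩
    · intro x hx
      exact ⟨fun h => (hgnd x hx).2 (h ▸ huv.symm), hno x hx⟩
    · intro x hx
      exact (hgnd x hx).2
    · rintro w ⟨hwu, hnuw⟩ hwS
      exact hdom w hwS hwu hnuw
  · rintro ⟨hgnd, hno, hdom⟩
    refine ⟨⟨?_, ?_⟩, ?_⟩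
    · intro x hx
      exact ⟨fun h => (hgnd x hx).2 (h ▸ huv), hno x hx⟩
    · intro w hwS hwu hnuw
      exact hdom w ⟨hwu, hnuw⟩ hwS
    · push_neg
      intro x hx
      exact (hgnd x hx).2

end EdgeRed
end Steps2

section Steps3
variable {V : Type*} [Fintype V]
namespace EdgeRed
open Finset

variable {G : SimpleGraph V} {u v : V}

lemma qCon_mono (S : Finset V) (h : qCon (G.deleteEdges {s(u, v)}) u S) : qCon G u S := by
  obtain ⟨hg, hd⟩ := h
  refine ⟨hg, fun w hwu hwS => ?_⟩
  obtain ⟨t, ht, htw, hor⟩ := hd w hwu hwS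
  refine ⟨t, ht, htw, hor.imp (ge_adj_of G u v _ _) ?_⟩
  rintro ⟨h1, h2⟩
  exact ⟨ge_adj_of G u v _ _ h1, ge_adj_of G u v _ _ h2⟩

open Classical in
/-- Step B, case `v ∉ S`. -/
lemma stepB_notmem_iff (huv : G.Adj u v) (S : Finset V) :
    ((qCon G u S ∧ ¬ qCon (G.deleteEdges {s(u, v)}) u S) ∧ v ∉ S) ↔ A1p G u v S := by
  classical
  have hne : u ≠ v := G.ne_of_adj huv
  constructor
  · rintro ⟨⟨⟨hgndC, hdomC⟩, hnot⟩, hvS⟩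
    have hgndCe : ∀ x ∈ S, x ≠ u := hgndC
    have hnot' : ¬ ∀ w, w ≠ u → w ∉ S → ∃ t ∈ S, t ≠ w ∧
        ((G.deleteEdges {s(u, v)}).Adj t w ∨
          ((G.deleteEdges {s(u, v)}).Adj u t ∧ (G.deleteEdges {s(u, v)}).Adj u w)) :=
      fun h => hnot ⟨hgndCe, h⟩
    push_neg at hnot'
    obtain ⟨w₀, hw₀u, hw₀S, hall⟩ := hnot'
    obtain ⟨t₁, ht₁S, ht₁w, hor⟩ := hdomC w₀ hw₀u hw₀S
    have h1 := hall t₁ ht₁S ht₁w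
    rcases hor with hadj | ⟨hut₁, huw₀⟩
    · exact absurd (ge_mk hadj (fun hc => hgndC t₁ ht₁S hc.1)
        (fun hc => hvS (by rw [← hc.1]; exact ht₁S))) h1.1
    · have ht₁v : t₁ ≠ v := fun h => hvS (h ▸ ht₁S)
      have hGe_ut₁ : (G.deleteEdges {s(u, v)}).Adj u t₁ :=
        ge_mk hut₁ (fun hc => ht₁v hc.2) (fun hc => hne hc.1)
      have hGe_uw₀ : ¬ (G.deleteEdges {s(u, v)}).Adj u w₀ := h1.2 hGe_ut₁
      have hw₀v : w₀ = v := by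
        by_contra hne'
        exact hGe_uw₀ (ge_mk huw₀ (fun hc => hne' hc.2) (fun hc => hne hc.1))
      rw [hw₀v] at hall
      refine ⟨⟨?_, ?_⟩, t₁, ht₁S, hut₁⟩
      · intro x hx
        have hxv : x ≠ v := fun h => hvS (h ▸ hx)
        refine ⟨hxv, fun hvx => ?_⟩
        exact (hall x hx hxv).1
          (ge_mk hvx.symm (fun hc => hgndC x hx hc.1) (fun hc => hxv hc.1))
      · intro w hwS hwu hnuw
        obtain ⟨t, htS, htw, hor⟩ := hdomC w hwu hwS
        rcases hor with hadj | ⟨_, huw⟩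
        · exact ⟨t, htS, hadj⟩
        · exact absurd huw hnuw
  · rintro ⟨⟨hgnd, hdom⟩, x₀, hx₀S, hx₀⟩
    have hvS : v ∉ S := fun h => (hgnd v h).1 rfl
    refine ⟨⟨⟨?_, ?_⟩, ?_⟩, hvS⟩
    · intro x hx
      exact fun h => (hgnd x hx).2 (h ▸ huv.symm)
    · intro w hwu hwS
      by_cases hadjuw : G.Adj u w
      · exact ⟨x₀, hx₀S, fun h => hwS (h ▸ hx₀S), Or.inr ⟨hx₀, hadjuw⟩⟩
      · obtain ⟨t, htS, hadj⟩ := hdom w hwS hwu hadjuw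
        exact ⟨t, htS, fun h => hwS (h ▸ htS), Or.inl hadj⟩
    · intro hconGe
      obtain ⟨t, htS, htv, hor⟩ := hconGe.2 v hne.symm hvS
      rcases hor with h | ⟨_, h⟩
      · exact (hgnd t htS).2 (ge_adj_of G u v _ _ h).symm
      · rw [ge_adj] at h
        exact h.2.1 ⟨rfl, rfl⟩

open Classical in
/-- Step B, case `v ∈ S`. -/
lemma stepB_mem_iff (huv : G.Adj u v) (S : Finset V) :
    ((qCon G u S ∧ ¬ qCon (G.deleteEdges {s(u, v)}) u S) ∧ v ∈ S) ↔
      (v ∈ S ∧ Ep G v u (S.erase v)) := by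
  classical
  have hne : u ≠ v := G.ne_of_adj huv
  have hvu : v ≠ u := hne.symm
  constructor
  · rintro ⟨⟨⟨hgndC, hdomC⟩, hnot⟩, hvS⟩
    have hnot' : ¬ ∀ w, w ≠ u → w ∉ S → ∃ t ∈ S, t ≠ w ∧
        ((G.deleteEdges {s(u, v)}).Adj t w ∨
          ((G.deleteEdges {s(u, v)}).Adj u t ∧ (G.deleteEdges {s(u, v)}).Adj u w)) :=
      fun h => hnot ⟨hgndC, h⟩
    push_neg at hnot'
    obtain ⟨w₀, hw₀u, hw₀S, hall⟩ := hnot'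
    have hw₀v : w₀ ≠ v := fun h => hw₀S (h ▸ hvS)
    obtain ⟨t₁, ht₁S, ht₁w, hor⟩ := hdomC w₀ hw₀u hw₀S
    have h1 := hall t₁ ht₁S ht₁w
    rcases hor with hadj | ⟨hut₁, huw₀⟩
    · exact absurd (ge_mk hadj (fun hc => hw₀v hc.2) (fun hc => hw₀u hc.2)) h1.1
    have hGe_uw₀ : (G.deleteEdges {s(u, v)}).Adj u w₀ :=
      ge_mk huw₀ (fun hc => hw₀v hc.2) (fun hc => hne hc.1)
    -- every member of S.erase v is a non-neighbor of both w₀ and u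
    have hT : ∀ t ∈ S.erase v, ¬ G.Adj t w₀ ∧ ¬ G.Adj u t := by
      intro t ht
      have htS := Finset.mem_of_mem_erase ht
      have htv := Finset.ne_of_mem_erase ht
      have h2 := hall t htS (fun h => hw₀S (h ▸ htS))
      constructor
      · exact fun hadj => h2.1 (ge_mk hadj (fun hc => hw₀v hc.2) (fun hc => htv hc.1))
      · intro hadj
        exact (h2.2 (ge_mk hadj (fun hc => htv hc.2) (fun hc => hne hc.1))) hGe_uw₀
    have hnvw₀ : ¬ G.Adj v w₀ := by
      intro hadj
      have h3 := hall v hvS (fun h => hw₀S (h ▸ hvS))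
      exact h3.1 (ge_mk hadj (fun hc => hvu hc.1) (fun hc => hw₀u hc.2))
    refine ⟨hvS, ⟨⟨?_, ?_⟩, w₀, huw₀, hnvw₀, hw₀v, ?_⟩⟩
    · intro x hx
      exact ⟨hgndC x (Finset.mem_of_mem_erase hx), (hT x hx).2⟩
    · rintro w hwT ⟨hwu, hnuw⟩ hnvw
      have hwv : w ≠ v := fun h => hnuw (h ▸ huv)
      have hwS : w ∉ S := fun h => hwT (Finset.mem_erase.2 ⟨hwv, h⟩)
      obtain ⟨t, htS, htw, hor⟩ := hdomC w hwu hwS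
      rcases hor with hadj | ⟨_, huw⟩
      · have htv : t ≠ v := fun h => hnvw (h ▸ hadj)
        exact ⟨t, Finset.mem_erase.2 ⟨htv, htS⟩, hadj⟩
      · exact absurd huw hnuw
    · rintro ⟨t, ht, hadj⟩
      exact (hT t ht).1 hadj
  · rintro ⟨hvS, ⟨hgndD, hdomD⟩, w₀, huw₀, hnvw₀, hw₀v, hnadj⟩
    have hw₀u : w₀ ≠ u := fun h => G.irrefl (h ▸ huw₀)
    have hw₀S : w₀ ∉ S := by
      intro h
      exact (hgndD w₀ (Finset.mem_erase.2 ⟨hw₀v, h⟩)).2 huw₀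
    refine ⟨⟨⟨?_, ?_⟩, ?_⟩, hvS⟩
    · intro x hx
      by_cases hxv : x = v
      · rw [hxv]; exact hvu
      · exact (hgndD x (Finset.mem_erase.2 ⟨hxv, hx⟩)).1
    · intro w hwu hwS
      by_cases hvw : G.Adj v w
      · exact ⟨v, hvS, fun h => hwS (h ▸ hvS), Or.inl hvw⟩
      by_cases huw : G.Adj u w
      · exact ⟨v, hvS, fun h => hwS (h ▸ hvS), Or.inr ⟨huv, huw⟩⟩
      · obtain ⟨t, htT, hadj⟩ := hdomD w (fun h => hwS (Finset.mem_of_mem_erase h))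
          ⟨hwu, huw⟩ hvw
        exact ⟨t, Finset.mem_of_mem_erase htT, fun h => hwS (h ▸ Finset.mem_of_mem_erase htT),
          Or.inl hadj⟩
    · intro hc
      obtain ⟨t, htS, htw, hor⟩ := hc.2 w₀ hw₀u hw₀S
      by_cases htv : t = v
      · rcases hor with h | ⟨h1, _⟩
        · rw [htv] at h
          exact hnvw₀ (ge_adj_of G u v _ _ h)
        · rw [ge_adj] at h1
          exact h1.2.1 ⟨rfl, htv⟩
      · have htT : t ∈ S.erase v := Finset.mem_erase.2 ⟨htv, htS⟩
        rcases hor with h | ⟨h1, _⟩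
        · exact hnadj ⟨t, htT, ge_adj_of G u v _ _ h⟩
        · exact (hgndD t htT).2 ((ge_adj_of G u v _ _ h1))

end EdgeRed
end Steps3

section Steps4
variable {V : Type*} [Fintype V]
namespace EdgeRed
open Finset

variable {G : SimpleGraph V} {u v : V}

open Classical in
lemma fpA (huv : G.Adj u v) :
    fp (domP G) = fp (domP (G.deleteEdges {s(u, v)}))
      + X * fp (Bp G u v) + X * fp (Bp G v u) := by
  have e1 := fp_split (domP G) (domP (G.deleteEdges {s(u, v)}))
  have e2 : fp (fun S => domP G S ∧ domP (G.deleteEdges {s(u, v)}) S)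
      = fp (domP (G.deleteEdges {s(u, v)})) := by
    refine fp_congr fun S => ⟨And.right, fun h => ⟨fun w => ?_, h⟩⟩
    refine (h w).imp id ?_
    rintro ⟨t, ht, ha⟩
    exact ⟨t, ht, ge_adj_of G u v _ _ ha⟩
  have e3 := fp_split (fun S => domP G S ∧ ¬ domP (G.deleteEdges {s(u, v)}) S)
    (fun S => u ∈ S)
  have e4 : fp (fun S => (domP G S ∧ ¬ domP (G.deleteEdges {s(u, v)}) S) ∧ u ∈ S)
      = X * fp (Bp G u v) :=
    fp_insert u _ _ (fun S => stepA_iff huv S) (fun S h => bp_not_mem huv h)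
  have e5 : fp (fun S => (domP G S ∧ ¬ domP (G.deleteEdges {s(u, v)}) S) ∧ ¬ u ∈ S)
      = X * fp (Bp G v u) := by
    rw [fp_congr (fun S => stepA_other huv S)]
    have hsw : G.deleteEdges {s(v, u)} = G.deleteEdges {s(u, v)} := by rw [Sym2.eq_swap]
    refine fp_insert v _ _ (fun S => ?_) (fun S h => bp_not_mem huv.symm h)
    have h := stepA_iff (G := G) huv.symm S
    rw [hsw] at h
    exact h
  rw [e1, e2, e3, e4, e5]
  ring

open Classical in
lemma fpB (huv : G.Adj u v) :
    fp (qCon G u) = fp (qCon (G.deleteEdges {s(u, v)}) u)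
      + fp (A1p G u v) + X * fp (Ep G v u) := by
  have e1 := fp_split (qCon G u) (qCon (G.deleteEdges {s(u, v)}) u)
  have e2 : fp (fun S => qCon G u S ∧ qCon (G.deleteEdges {s(u, v)}) u S)
      = fp (qCon (G.deleteEdges {s(u, v)}) u) :=
    fp_congr fun S => ⟨And.right, fun h => ⟨qCon_mono S h, h⟩⟩
  have e3 := fp_split (fun S => qCon G u S ∧ ¬ qCon (G.deleteEdges {s(u, v)}) u S)
    (fun S => v ∈ S)
  have e4 : fp (fun S => (qCon G u S ∧ ¬ qCon (G.deleteEdges {s(u, v)}) u S) ∧ v ∈ S)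
      = X * fp (Ep G v u) :=
    fp_insert v _ _ (fun S => stepB_mem_iff huv S) (fun S h => ep_not_mem huv h)
  have e5 : fp (fun S => (qCon G u S ∧ ¬ qCon (G.deleteEdges {s(u, v)}) u S) ∧ ¬ v ∈ S)
      = fp (A1p G u v) :=
    fp_congr (fun S => stepB_notmem_iff huv S)
  rw [e1, e2, e3, e4, e5]
  ring

open Classical in
lemma fpC1 (huv : G.Adj u v) :
    fp (qN (G.deleteEdges {s(u, v)}) v) = X * fp (Dp G u v)
      + fp (fun S => qN G v S ∧ ∃ x ∈ S, G.Adj u x) := by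
  have e1 := fp_split (qN (G.deleteEdges {s(u, v)}) v) (fun S => u ∈ S)
  have e2 : fp (fun S => qN (G.deleteEdges {s(u, v)}) v S ∧ u ∈ S) = X * fp (Dp G u v) :=
    fp_insert u _ _ (fun S => stepC_mem_iff huv S) (fun S h => dp_not_mem huv h)
  have e3 : fp (fun S => qN (G.deleteEdges {s(u, v)}) v S ∧ ¬ u ∈ S)
      = fp (fun S => qN G v S ∧ ∃ x ∈ S, G.Adj u x) :=
    fp_congr (fun S => stepC_notmem_iff huv S)
  rw [e1, e2, e3]

open Classical in
lemma fpC2 (huv : G.Adj u v) :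
    fp (qN G v) = fp (Cp G u v) + fp (fun S => qN G v S ∧ ∃ x ∈ S, G.Adj u x) := by
  have e1 := fp_split (qN G v) (fun S => ∃ x ∈ S, G.Adj u x)
  have e2 : fp (fun S => qN G v S ∧ ¬ ∃ x ∈ S, G.Adj u x) = fp (Cp G u v) :=
    fp_congr (fun S => stepC_cp_iff S)
  rw [e1, e2]
  ring

open Classical in
lemma fpD (huv : G.Adj u v) :
    fp (Dp G u v) = fp (Bp G u v) + fp (Ep G u v) := by
  have e1 := fp_split (Dp G u v)
    (fun S => ∀ w, G.Adj v w → ¬ G.Adj u w → w ≠ u → adjS G S w)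
  have e2 : fp (fun S => Dp G u v S ∧
      ∀ w, G.Adj v w → ¬ G.Adj u w → w ≠ u → adjS G S w) = fp (Bp G u v) :=
    fp_congr (fun S => stepD_b_iff huv S)
  have e3 : fp (fun S => Dp G u v S ∧
      ¬ ∀ w, G.Adj v w → ¬ G.Adj u w → w ≠ u → adjS G S w) = fp (Ep G u v) :=
    fp_congr (fun S => stepD_e_iff S)
  rw [e1, e2, e3]

open Classical in
lemma fpE (huv : G.Adj u v) :
    fp (Bp G u v) = fp (A1p G u v) + fp (Cp G v u) := by
  have e1 := fp_split (Bp G u v) (fun S => ∃ x ∈ S, G.Adj u x)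
  have e2 : fp (fun S => Bp G u v S ∧ ∃ x ∈ S, G.Adj u x) = fp (A1p G u v) :=
    fp_congr (fun S => Iff.rfl)
  have e3 : fp (fun S => Bp G u v S ∧ ¬ ∃ x ∈ S, G.Adj u x) = fp (Cp G v u) :=
    fp_congr (fun S => stepE_iff huv S)
  rw [e1, e2, e3]

lemma domPoly_congr_inst {W : Type*} (i1 i2 : Fintype W) (H : SimpleGraph W) :
    @domPoly W i1 H = @domPoly W i2 H := by
  congr 1
  exact Subsingleton.elim i1 i2

variable (G u) in
open Classical in
lemma domPoly_con (H : SimpleGraph V) (w : V) :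
    domPoly (H.contractVert w) = fp (qCon H w) := by
  refine Eq.trans (domPoly_congr_inst _ _ _) (Eq.trans (domPoly_subtype (fun x => x ≠ w)
    (H.contractVert w)
    (fun t w' => t ≠ w' ∧ (H.Adj t w' ∨ (H.Adj w t ∧ H.Adj w w'))) ?_)
    (fp_congr fun S => Iff.rfl))
  · intro a b
    show (SimpleGraph.fromRel _).Adj a b ↔ _
    rw [SimpleGraph.fromRel_adj]
    constructor
    · rintro ⟨hne, h | h⟩
      · exact ⟨fun he => hne (Subtype.ext he), h⟩
      · refine ⟨fun he => hne (Subtype.ext he), ?_⟩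
        rcases h with h | ⟨h1, h2⟩
        · exact Or.inl h.symm
        · exact Or.inr ⟨h2, h1⟩
    · rintro ⟨hne, h⟩
      exact ⟨fun he => hne (congrArg Subtype.val he), Or.inl h⟩

open Classical in
lemma domPoly_delN (H : SimpleGraph V) (w : V) :
    domPoly (H.deleteClosedNbhd w) = fp (qN H w) := by
  exact Eq.trans (domPoly_congr_inst _ _ _)
    (Eq.trans (domPoly_subtype (fun x => x ≠ w ∧ ¬ H.Adj w x) (H.deleteClosedNbhd w)
      (fun a b => H.Adj a b) (fun a b => Iff.rfl)) (fp_congr fun S => Iff.rfl))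

end EdgeRed
end Steps4

open EdgeRed

open Classical in
/-- Edge reduction formula.  For an edge `e = {u,v}` of `G`,
`D(G,x) = D(G−e,x) + x/(x−1)·[D(G−e/u,x) + D(G−e/v,x) − D(G/u,x) − D(G/v,x)
 − D(G−N[u],x) − D(G−N[v],x) + D(G−e−N[u],x) + D(G−e−N[v],x)]`,
stated equivalently as the polynomial identity obtained by multiplying through
by `x − 1`. -/
theorem domPoly_edge_reduction {V : Type*} [Fintype V] (G : SimpleGraph V) (u v : V)
    (huv : G.Adj u v) :
    (X - 1) * (domPoly G - domPoly (G.deleteEdges {s(u, v)})) =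
      X * (domPoly ((G.deleteEdges {s(u, v)}).contractVert u)
        + domPoly ((G.deleteEdges {s(u, v)}).contractVert v)
        - domPoly (G.contractVert u) - domPoly (G.contractVert v)
        - domPoly (G.deleteClosedNbhd u) - domPoly (G.deleteClosedNbhd v)
        + domPoly ((G.deleteEdges {s(u, v)}).deleteClosedNbhd u)
        + domPoly ((G.deleteEdges {s(u, v)}).deleteClosedNbhd v)) := by
  classical
  have hsw : G.deleteEdges {s(v, u)} = G.deleteEdges {s(u, v)} := by rw [Sym2.eq_swap]
  rw [domPoly_eq_fp G, domPoly_eq_fp (G.deleteEdges {s(u, v)}),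
      domPoly_con (G.deleteEdges {s(u, v)}) u, domPoly_con (G.deleteEdges {s(u, v)}) v,
      domPoly_con G u, domPoly_con G v,
      domPoly_delN G u, domPoly_delN G v,
      (domPoly_congr_inst _ _ _).trans (domPoly_delN (G.deleteEdges {s(u, v)}) u),
      (domPoly_congr_inst _ _ _).trans (domPoly_delN (G.deleteEdges {s(u, v)}) v)]
  have h1 := fpA huv
  have h2 := fpB huv
  have h3 := fpB huv.symm
  rw [hsw] at h3
  have h4 := fpC1 huv
  have h5 := fpC2 huv
  have h6 := fpC1 huv.symm
  rw [hsw] at h6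
  have h7 := fpC2 huv.symm
  have h8 := fpD huv
  have h9 := fpD huv.symm
  have h10 := fpE huv
  have h11 := fpE huv.symm
  rw [h1, h2, h3, h4, h5, h6, h7, h8, h9, h10, h11]
  ring
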